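/- Let G be a 2k-tree-connected multigraph. Then bi(G) ≥ k if and only if G contains k pairwise edge-disjoint odd cycles. -/

import Mathlib

namespace MG

variable {V E : Type} [Fintype V] [Fintype E] [DecidableEq V] [DecidableEq E]

/-- Degree of `v` in the spanning subgraph with edge set `S`; loops count twice. -/
def deg (ends : E → V × V) (S : Finset E) (v : V) : ℕ :=
  (S.filter fun e => (ends e).1 = v).card + (S.filter fun e => (ends e).2 = v).card

/-- Edges of `S` with exactly one end in `A`. -/
def cut (ends : E → V × V) (S : Finset E) (A : Finset V) : Finset E :=
  S.filter fun e => ¬ (((ends e).1 ∈ A) ↔ ((ends e).2 ∈ A))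

/-- Edges of `S` with both ends in `A`. -/
def inside (ends : E → V × V) (S : Finset E) (A : Finset V) : Finset E :=
  S.filter fun e => (ends e).1 ∈ A ∧ (ends e).2 ∈ A

/-- `m`-edge-connected: every edge cut has at least `m` edges. -/
def EdgeConn (ends : E → V × V) (m : ℕ) : Prop :=
  ∀ A : Finset V, A.Nonempty → A ≠ Finset.univ → m ≤ (cut ends Finset.univ A).card

/-- Essentially `lam`-edge-connected: every edge cut of size `< lam` has all its
edges incident with one common vertex. -/
def EssEdgeConn (ends : E → V × V) (lam : ℕ) : Prop :=
  ∀ A : Finset V, A.Nonempty → A ≠ Finset.univ →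
    (cut ends Finset.univ A).card < lam →
      ∃ v : V, ∀ e ∈ cut ends Finset.univ A, (ends e).1 = v ∨ (ends e).2 = v

/-- The edge set `S` induces a bipartite graph. -/
def BipOn (ends : E → V × V) (S : Finset E) : Prop :=
  ∃ X : Finset V, ∀ e ∈ S, ¬ (((ends e).1 ∈ X) ↔ ((ends e).2 ∈ X))

/-- Edges of `S` not crossing the bipartition `(X, Xᶜ)`. -/
def bad (ends : E → V × V) (S : Finset E) (X : Finset V) : Finset E :=
  S.filter fun e => (((ends e).1 ∈ X) ↔ ((ends e).2 ∈ X))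

/-- The bipartite index: fewest edge deletions making the graph `(V, S)` bipartite. -/
def biIndexOn (ends : E → V × V) (S : Finset E) : ℕ :=
  Finset.univ.inf' Finset.univ_nonempty fun X : Finset V => (bad ends S X).card

/-- Adjacency via an edge of `S`. -/
def adjOn (ends : E → V × V) (S : Finset E) (a b : V) : Prop :=
  ∃ e ∈ S, ends e = (a, b) ∨ ends e = (b, a)

/-- The spanning subgraph with edge set `S` is connected. -/
def ConnOn (ends : E → V × V) (S : Finset E) : Prop :=
  ∀ a b : V, Relation.ReflTransGen (adjOn ends S) a b

/-- `T` is the edge set of a spanning tree. -/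
def IsSpTree (ends : E → V × V) (T : Finset E) : Prop :=
  ConnOn ends T ∧ T.card + 1 = Fintype.card V

/-- `m`-tree-connected inside `S`: `m` pairwise edge-disjoint spanning trees using edges of `S`. -/
def TreeConnOn (ends : E → V × V) (m : ℕ) (S : Finset E) : Prop :=
  ∃ T : Fin m → Finset E, (∀ i, T i ⊆ S ∧ IsSpTree ends (T i)) ∧
    ∀ i j, i ≠ j → Disjoint (T i) (T j)

/-- `C` is the edge set of an odd cycle: odd, nonempty, 2-regular on its support and
connected on its support. -/
def IsOddCycle (ends : E → V × V) (C : Finset E) : Prop :=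
  C.Nonempty ∧ Odd C.card ∧ (∀ v : V, deg ends C v = 0 ∨ deg ends C v = 2) ∧
    ∀ a b : V, 0 < deg ends C a → 0 < deg ends C b →
      Relation.ReflTransGen (adjOn ends C) a b

/-- `f` is compatible with the graph with respect to the bipartition `(X, Xᶜ)`. -/
def CompatAt (ends : E → V × V) {k : ℕ} (f : V → ZMod k) (X : Finset V) : Prop :=
  (∃ x : ℕ, x ≤ (inside ends Finset.univ X).card ∧
    (∑ v ∈ X, f v) - ((2 * x : ℕ) : ZMod k) = ∑ v ∈ Xᶜ, f v) ∨
  (∃ y : ℕ, y ≤ (inside ends Finset.univ Xᶜ).card ∧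
    (∑ v ∈ X, f v) = (∑ v ∈ Xᶜ, f v) - ((2 * y : ℕ) : ZMod k))

end MG

open MG Finset
section AuxWalk

namespace MGAux

variable {V E : Type}

/-- Walks in the multigraph with edge set `S`. -/
inductive IW (ends : E → V × V) (S : Finset E) : V → V → Type where
  | nil (a : V) : IW ends S a a
  | cons {b c : V} (a : V) (e : E) (he : e ∈ S)
      (hor : ends e = (a, b) ∨ ends e = (b, a)) (w : IW ends S b c) : IW ends S a c

namespace IW

variable {ends : E → V × V} {S S' : Finset E}

def edges : ∀ {a b : V}, IW ends S a b → List E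
  | _, _, .nil _ => []
  | _, _, .cons _ e _ _ w => e :: w.edges

def verts : ∀ {a b : V}, IW ends S a b → List V
  | a, _, .nil _ => [a]
  | a, _, .cons _ _ _ _ w => a :: w.verts

@[simp] lemma edges_nil (a : V) : (IW.nil (ends := ends) (S := S) a).edges = [] := rfl

@[simp] lemma edges_cons {b c : V} (a : V) (e : E) (he : e ∈ S)
    (hor : ends e = (a, b) ∨ ends e = (b, a)) (w : IW ends S b c) :
    (IW.cons a e he hor w).edges = e :: w.edges := rfl

@[simp] lemma verts_nil (a : V) : (IW.nil (ends := ends) (S := S) a).verts = [a] := rfl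

@[simp] lemma verts_cons {b c : V} (a : V) (e : E) (he : e ∈ S)
    (hor : ends e = (a, b) ∨ ends e = (b, a)) (w : IW ends S b c) :
    (IW.cons a e he hor w).verts = a :: w.verts := rfl

lemma verts_ne_nil : ∀ {a b : V} (w : IW ends S a b), w.verts ≠ []
  | _, _, .nil _ => by simp
  | _, _, .cons _ _ _ _ _ => by simp

lemma head_verts : ∀ {a b : V} (w : IW ends S a b), ∃ t, w.verts = a :: t
  | _, _, .nil _ => ⟨[], rfl⟩
  | _, _, .cons _ _ _ _ w => ⟨w.verts, rfl⟩

lemma length_verts : ∀ {a b : V} (w : IW ends S a b), w.verts.length = w.edges.length + 1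
  | _, _, .nil _ => rfl
  | _, _, .cons _ _ _ _ w => by simp [length_verts w]

lemma verts_concat : ∀ {a b : V} (w : IW ends S a b), w.verts.dropLast ++ [b] = w.verts
  | _, _, .nil a => rfl
  | _, _, .cons (b := b') (c := c) a e he hor w => by
    have ih := verts_concat w
    show ((a :: w.verts).dropLast) ++ [c] = a :: w.verts
    rw [List.dropLast_cons_of_ne_nil (verts_ne_nil w), List.cons_append, ih]

lemma start_mem_verts : ∀ {a b : V} (w : IW ends S a b), a ∈ w.verts := by
  intro a b w
  obtain ⟨t, ht⟩ := head_verts w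
  rw [ht]; exact List.mem_cons_self

lemma end_mem_verts : ∀ {a b : V} (w : IW ends S a b), b ∈ w.verts := by
  intro a b w
  rw [← verts_concat w]
  exact List.mem_append_right _ (List.mem_singleton.mpr rfl)

lemma edges_mem : ∀ {a b : V} (w : IW ends S a b) {e : E}, e ∈ w.edges → e ∈ S
  | _, _, .nil _, e => by simp
  | _, _, .cons _ e' he' hor w, e => by
    intro h
    rcases List.mem_cons.mp h with h | h
    · exact h ▸ he'
    · exact edges_mem w h

def append : ∀ {a b c : V}, IW ends S a b → IW ends S b c → IW ends S a c
  | _, _, _, .nil _, w2 => w2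
  | _, _, _, .cons a e he hor w, w2 => .cons a e he hor (w.append w2)

@[simp] lemma edges_append : ∀ {a b c : V} (w1 : IW ends S a b) (w2 : IW ends S b c),
    (w1.append w2).edges = w1.edges ++ w2.edges
  | _, _, _, .nil _, w2 => rfl
  | _, _, _, .cons a e he hor w, w2 => by
    show e :: (w.append w2).edges = (e :: w.edges) ++ w2.edges
    rw [edges_append w w2]; rfl

def reverse : ∀ {a b : V}, IW ends S a b → IW ends S b a
  | _, _, .nil a => .nil a
  | _, _, .cons (b := b) a e he hor w =>
      w.reverse.append (.cons b e he (hor.symm) (.nil a))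

@[simp] lemma length_edges_reverse : ∀ {a b : V} (w : IW ends S a b),
    w.reverse.edges.length = w.edges.length
  | _, _, .nil _ => rfl
  | _, _, .cons a e he hor w => by
    show ((w.reverse.append _).edges).length = (e :: w.edges).length
    rw [edges_append]
    simp [length_edges_reverse w]

def mono (hs : S ⊆ S') : ∀ {a b : V}, IW ends S a b → IW ends S' a b
  | _, _, .nil a => .nil a
  | _, _, .cons a e he hor w => .cons a e (hs he) hor (w.mono hs)

@[simp] lemma edges_mono (hs : S ⊆ S') : ∀ {a b : V} (w : IW ends S a b),
    (w.mono hs).edges = w.edges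
  | _, _, .nil a => rfl
  | _, _, .cons a e he hor w => by
    show e :: (w.mono hs).edges = e :: w.edges
    rw [edges_mono hs w]

end IW

end MGAux

end AuxWalk
section AuxWalk2

namespace MGAux

variable {V E : Type} {ends : E → V × V} {S S' : Finset E}

open MG

lemma adjOn_symm : Symmetric (adjOn ends S) := by
  rintro x y ⟨e, he, h⟩
  exact ⟨e, he, h.symm⟩

lemma rtg_symm {a b : V} (h : Relation.ReflTransGen (adjOn ends S) a b) :
    Relation.ReflTransGen (adjOn ends S) b a :=
  by
    haveI : Std.Symm (adjOn ends S) := ⟨fun x y h => adjOn_symm h⟩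
    exact Std.Symm.symm a b h

namespace IW

/-- Build a walk from reachability. -/
lemma of_rtg {a b : V} (h : Relation.ReflTransGen (adjOn ends S) a b) :
    Nonempty (IW ends S a b) := by
  induction h with
  | refl => exact ⟨.nil a⟩
  | tail hab hbc ih =>
    obtain ⟨w⟩ := ih
    obtain ⟨e, he, hor⟩ := hbc
    exact ⟨w.append (.cons _ e he hor (.nil _))⟩

/-- All vertices of a walk are reachable from the start using only the walk's edges. -/
lemma rtg_start [DecidableEq E] {a b : V} (w : IW ends S a b) :
    ∀ {v : V}, v ∈ w.verts → Relation.ReflTransGen (adjOn ends w.edges.toFinset) a v := by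
  induction w with
  | nil a =>
    intro v hv
    simp only [verts_nil, List.mem_singleton] at hv
    exact hv ▸ Relation.ReflTransGen.refl
  | cons a e he hor w ih =>
    intro v hv
    rcases List.mem_cons.mp hv with h | h
    · subst h; exact Relation.ReflTransGen.refl
    · refine Relation.ReflTransGen.head (b := _) ⟨e, by simp, hor⟩ ?_
      refine Relation.ReflTransGen.mono ?_ _ _ (ih h)
      rintro x y ⟨e', he', hor'⟩
      refine ⟨e', ?_, hor'⟩
      simp only [List.mem_toFinset] at he' ⊢
      simp [he']

/-- Parity of a walk whose edges all cross `g`. -/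
lemma even_iff_cross {g : Finset V} [DecidableEq V]
    (hcr : ∀ e ∈ S, ¬ (((ends e).1 ∈ g) ↔ ((ends e).2 ∈ g)))
    {a b : V} (w : IW ends S a b) : ((a ∈ g) ↔ (b ∈ g)) ↔ Even w.edges.length := by
  induction w with
  | nil a => simp
  | @cons b c a e he hor w ih =>
    have hx : ¬ ((a ∈ g) ↔ (b ∈ g)) := by
      have := hcr e he
      rcases hor with h | h <;> rw [h] at this <;> tauto
    show ((a ∈ g) ↔ (c ∈ g)) ↔ Even (e :: w.edges).length
    rw [List.length_cons, Nat.even_add_one, ← ih]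
    tauto

/-- Split a walk at the first occurrence of a vertex. -/
lemma split_first {a c v : V} (w : IW ends S a c) (hv : v ∈ w.verts) :
    ∃ (w₁ : IW ends S a v) (w₂ : IW ends S v c),
      w.edges = w₁.edges ++ w₂.edges ∧ w.verts = w₁.verts.dropLast ++ w₂.verts ∧
      v ∉ w₁.verts.dropLast := by
  induction w with
  | nil a =>
    simp only [verts_nil, List.mem_singleton] at hv
    subst hv
    exact ⟨.nil v, .nil v, by simp⟩
  | cons a e he hor w ih =>
    by_cases hva : v = a
    · rw [hva]
      exact ⟨.nil a, .cons a e he hor w, by simp⟩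
    · have hv' : v ∈ w.verts := by
        rcases List.mem_cons.mp hv with h | h
        · exact absurd h hva
        · exact h
      obtain ⟨w₁, w₂, hE, hV, hnin⟩ := ih hv'
      refine ⟨.cons a e he hor w₁, w₂, ?_, ?_, ?_⟩
      · simp [hE]
      · show a :: w.verts = (a :: w₁.verts).dropLast ++ w₂.verts
        rw [List.dropLast_cons_of_ne_nil (verts_ne_nil w₁), List.cons_append, hV]
      · show v ∉ (a :: w₁.verts).dropLast
        rw [List.dropLast_cons_of_ne_nil (verts_ne_nil w₁)]
        simp only [List.mem_cons]
        rintro (h | h)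
        · exact hva h
        · exact hnin h

/-- Find the first occurrence of an edge in a walk. -/
lemma find_edge {a c : V} (w : IW ends S a c) {e : E} (he : e ∈ w.edges) :
    ∃ (x y : V) (w₁ : IW ends S a x) (w₂ : IW ends S y c),
      (ends e = (x, y) ∨ ends e = (y, x)) ∧
      w.edges = w₁.edges ++ e :: w₂.edges ∧
      w.verts = w₁.verts ++ w₂.verts ∧ e ∉ w₁.edges := by
  induction w with
  | nil a => simp at he
  | cons a e' he' hor w ih =>
    by_cases hee : e' = e
    · subst hee
      exact ⟨a, _, .nil a, w, hor, by simp, by simp, by simp⟩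
    · have he2 : e ∈ w.edges := by
        rcases List.mem_cons.mp he with h | h
        · exact absurd h.symm hee
        · exact h
      obtain ⟨x, y, w₁, w₂, hor2, hE, hV, hni⟩ := ih he2
      refine ⟨x, y, .cons a e' he' hor w₁, w₂, hor2, by simp [hE], by simp [hV], ?_⟩
      simp only [edges_cons, List.mem_cons]
      rintro (h | h)
      · exact hee h.symm
      · exact hni h

end IW

end MGAux

end AuxWalk2
section AuxWalk3

set_option linter.unusedSectionVars false

namespace MGAux

variable {V E : Type} [DecidableEq V] [DecidableEq E] {ends : E → V × V} {S : Finset E}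

open MG

/-- Incidence count of a vertex in an edge (loops count twice). -/
def inc (ends : E → V × V) (v : V) (e : E) : ℕ :=
  (if (ends e).1 = v then 1 else 0) + (if (ends e).2 = v then 1 else 0)

lemma deg_eq_sum [Fintype V] [Fintype E] (C : Finset E) (v : V) :
    deg ends C v = ∑ e ∈ C, inc ends v e := by
  unfold deg inc
  rw [Finset.card_filter, Finset.card_filter, ← Finset.sum_add_distrib]

namespace IW

lemma sum_inc (v : V) {a b : V} (w : IW ends S a b) :
    (w.edges.map (inc ends v)).sum = w.verts.dropLast.count v + w.verts.tail.count v := by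
  induction w with
  | nil a => simp
  | @cons b c a e he hor w ih =>
    have hinc : inc ends v e = (if a = v then 1 else 0) + (if b = v then 1 else 0) := by
      unfold inc
      rcases hor with h | h <;> rw [h] <;> simp [add_comm]
    obtain ⟨t, ht⟩ := head_verts w
    show ((e :: w.edges).map (inc ends v)).sum =
      (a :: w.verts).dropLast.count v + (a :: w.verts).tail.count v
    rw [List.dropLast_cons_of_ne_nil (verts_ne_nil w), List.tail_cons]
    simp only [List.map_cons, List.sum_cons]
    rw [ih, hinc]
    have h1 : w.verts.count v = t.count v + (if b == v then 1 else 0) := by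
      rw [ht, List.count_cons]
    have h2 : w.verts.tail.count v = t.count v := by rw [ht, List.tail_cons]
    have h3 : (a :: w.verts.dropLast).count v
        = w.verts.dropLast.count v + (if a == v then 1 else 0) := by
      rw [List.count_cons]
    simp only [beq_iff_eq] at h1 h3
    rw [h3, h1, h2]
    omega

lemma count_tail_eq {a : V} (w : IW ends S a a) (v : V) :
    w.verts.tail.count v = w.verts.dropLast.count v := by
  obtain ⟨t, ht⟩ := head_verts w
  have h2 : w.verts.tail.count v = t.count v := by rw [ht, List.tail_cons]
  have h1 : w.verts.count v = t.count v + (if a == v then 1 else 0) := by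
    rw [ht, List.count_cons]
  have h3 : w.verts.count v = w.verts.dropLast.count v + (if a == v then 1 else 0) := by
    conv_lhs => rw [← verts_concat w]
    rw [List.count_append]
    congr 1
    show List.count v (a :: []) = _
    rw [List.count_cons, List.count_nil]
    omega
  omega

/-- A nonempty closed walk does not have distinct vertices. -/
lemma not_nodup_closed_verts {p : V} (w : IW ends S p p) (hne : w.edges ≠ []) :
    ¬ w.verts.Nodup := by
  obtain ⟨t, ht⟩ := head_verts w
  have hc := verts_concat w
  have hlen : w.verts.length = w.edges.length + 1 := length_verts w
  have hel : 1 ≤ w.edges.length := by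
    rcases Nat.eq_zero_or_pos w.edges.length with h | h
    · exact absurd (List.length_eq_zero_iff.mp h) hne
    · exact h
  have hdl : w.verts.dropLast ≠ [] := by
    intro h
    rw [h] at hc
    rw [← hc] at hlen
    simp only [List.nil_append, List.length_singleton] at hlen
    omega
  obtain ⟨d, ds, hds⟩ := List.exists_cons_of_ne_nil hdl
  have hthis : w.verts = d :: (ds ++ [p]) := by rw [← hc, hds]; rfl
  rw [ht] at hthis
  injection hthis with hd htt
  rw [ht, htt]
  intro hnd
  have : p ∈ ds ++ [p] := List.mem_append_right _ (List.mem_singleton.mpr rfl)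
  exact (List.nodup_cons.mp hnd).1 this

/-- Edges of an odd simple closed walk are distinct. -/
lemma edges_nodup_of_simple {a : V} (w : IW ends S a a) (hodd : Odd w.edges.length)
    (hnd : w.verts.dropLast.Nodup) : w.edges.Nodup := by
  by_contra h
  obtain ⟨e, hce⟩ : ∃ e, ¬ w.edges.count e ≤ 1 := by
    by_contra h2
    push_neg at h2
    exact h (List.nodup_iff_count_le_one.mpr fun e => by have := h2 e; omega)
  have hce2 : 2 ≤ w.edges.count e := by omega
  have heme : e ∈ w.edges := List.count_pos_iff.mp (by omega)
  obtain ⟨x, y, w₁, w₂, hor, hE, hV, hni⟩ := find_edge w heme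
  have he2 : e ∈ w₂.edges := by
    have hcnt : w.edges.count e = w₁.edges.count e + (w₂.edges.count e + 1) := by
      rw [hE, List.count_append, List.count_cons]
      simp
    rw [List.count_eq_zero.mpr hni] at hcnt
    exact List.count_pos_iff.mp (by omega)
  obtain ⟨x', y', w₃, w₄, hor', hE', hV', _⟩ := find_edge w₂ he2
  have hVfull : w.verts = w₁.verts ++ (w₃.verts ++ w₄.verts) := by rw [hV, hV']
  have hne34 : w₃.verts ++ w₄.verts ≠ [] := by
    intro hh
    exact verts_ne_nil w₄ (List.append_eq_nil_iff.mp hh).2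
  have hdl : w.verts.dropLast = w₁.verts ++ (w₃.verts ++ w₄.verts.dropLast) := by
    rw [hVfull, List.dropLast_append_of_ne_nil hne34,
      List.dropLast_append_of_ne_nil (verts_ne_nil w₄)]
  rw [hdl] at hnd
  rw [List.nodup_append] at hnd
  obtain ⟨hnd1, hnd23, hdisj⟩ := hnd
  rw [List.nodup_append] at hnd23
  obtain ⟨hnd3, hnd4, hdisj34⟩ := hnd23
  have hcases : (x = x' ∧ y = y') ∨ (x = y' ∧ y = x') := by
    rcases hor with h1 | h1 <;> rcases hor' with h2 | h2 <;>
      · have h3 := h1.symm.trans h2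
        rw [Prod.mk.injEq] at h3
        first
          | exact Or.inl h3
          | exact Or.inr h3
          | exact Or.inl ⟨h3.2, h3.1⟩
          | exact Or.inr ⟨h3.2, h3.1⟩
  rcases hcases with ⟨hxx, _⟩ | ⟨hxy, hyx⟩
  · subst hxx
    exact hdisj _ (end_mem_verts w₁) _ (List.mem_append_left _ (end_mem_verts w₃)) rfl
  · subst hxy
    subst hyx
    -- now w₃ : IW S y y, w₄ : IW S x a, w₁ : IW S a x
    by_cases h3 : w₃.edges = []
    · by_cases h4 : w₄.edges = []
      · have hxa : x = a := by
          have hlen4 : w₄.verts.length = 1 := by rw [length_verts, h4]; rfl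
          obtain ⟨t₄, ht₄⟩ := head_verts w₄
          have hmem := end_mem_verts w₄
          rw [ht₄] at hlen4 hmem
          have ht₄nil : t₄ = [] := by
            simp only [List.length_cons] at hlen4
            exact List.length_eq_zero_iff.mp (by omega)
          rw [ht₄nil] at hmem
          simpa using (List.mem_singleton.mp hmem).symm
        by_cases h1 : w₁.edges = []
        · have hlen2 : w.edges.length = 2 := by
            rw [hE, hE', h1, h3, h4]
            rfl
          rw [hlen2] at hodd
          exact (by decide : ¬ Odd 2) hodd
        · subst hxa
          exact not_nodup_closed_verts w₁ h1 hnd1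
      · obtain ⟨t₄, ht₄⟩ := head_verts w₄
        have ht₄ne : t₄ ≠ [] := by
          intro hnil
          have hl := length_verts w₄
          rw [ht₄, hnil] at hl
          simp only [List.length_singleton] at hl
          exact h4 (List.length_eq_zero_iff.mp (by omega))
        have hxin : x ∈ w₄.verts.dropLast := by
          rw [ht₄, List.dropLast_cons_of_ne_nil ht₄ne]
          exact List.mem_cons_self
        exact hdisj _ (end_mem_verts w₁) _ (List.mem_append_right _ hxin) rfl
    · exact not_nodup_closed_verts w₃ h3 hnd3

end IW

end MGAux

end AuxWalk3
section AuxWalk4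

set_option linter.unusedSectionVars false

namespace MGAux

variable {V E : Type} [DecidableEq V] [DecidableEq E] {ends : E → V × V} {S : Finset E}

open MG

namespace IW

lemma split_closed_aux {x c : V} (w₂ : IW ends S x c) (hcnt : 2 ≤ w₂.verts.dropLast.count x) :
    ∃ (z₁ : IW ends S x x) (z₂ : IW ends S x c),
      z₁.edges.length + z₂.edges.length = w₂.edges.length ∧
      0 < z₁.edges.length ∧ 0 < z₂.edges.length := by
  cases w₂ with
  | nil => simp at hcnt
  | @cons b c a' e he hor w' =>
    have hdl : (IW.cons x e he hor w').verts.dropLast = x :: w'.verts.dropLast := by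
      show (x :: w'.verts).dropLast = _
      rw [List.dropLast_cons_of_ne_nil (verts_ne_nil w')]
    rw [hdl, List.count_cons_self] at hcnt
    have hxdl : x ∈ w'.verts.dropLast := List.count_pos_iff.mp (by omega)
    have hxw' : x ∈ w'.verts := (List.dropLast_sublist w'.verts).mem hxdl
    obtain ⟨p₁, p₂, hE', hV', hx1⟩ := split_first w' hxw'
    refine ⟨.cons x e he hor p₁, p₂, ?_, ?_, ?_⟩
    · show (e :: _).length + _ = (e :: _).length
      rw [hE']
      simp
      omega
    · simp
    · rcases Nat.eq_zero_or_pos p₂.edges.length with h0 | h0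
      · exfalso
        obtain ⟨t, ht⟩ := head_verts p₂
        have hl := length_verts p₂
        rw [ht] at hl
        rw [List.length_eq_zero_iff.mp h0] at hl
        simp only [List.length_cons, List.length_nil] at hl
        have htnil : t = [] := List.length_eq_zero_iff.mp (by omega)
        rw [htnil] at ht
        rw [hV', ht, List.dropLast_concat] at hxdl
        exact hx1 hxdl
      · exact h0

/-- A closed walk with repeated inner vertices splits into two shorter closed walks. -/
lemma split_closed {a : V} (w : IW ends S a a) (hd : ¬ w.verts.dropLast.Nodup) :
    ∃ (v₁ : V) (u₁ : IW ends S v₁ v₁) (v₂ : V) (u₂ : IW ends S v₂ v₂),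
      u₁.edges.length + u₂.edges.length = w.edges.length ∧
      0 < u₁.edges.length ∧ 0 < u₂.edges.length := by
  obtain ⟨x, hx⟩ : ∃ x, 2 ≤ w.verts.dropLast.count x := by
    by_contra h2
    push_neg at h2
    exact hd (List.nodup_iff_count_le_one.mpr fun v => by have := h2 v; omega)
  have hxv : x ∈ w.verts := by
    have h1 : 0 < w.verts.dropLast.count x := by omega
    exact (List.dropLast_sublist w.verts).mem (List.count_pos_iff.mp h1)
  obtain ⟨w₁, w₂, hE, hV, hx1⟩ := split_first w hxv
  have hcnt : 2 ≤ w₂.verts.dropLast.count x := by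
    have hdleq : w.verts.dropLast = w₁.verts.dropLast ++ w₂.verts.dropLast := by
      rw [hV, List.dropLast_append_of_ne_nil (verts_ne_nil w₂)]
    have hc0 : w₁.verts.dropLast.count x = 0 := List.count_eq_zero.mpr hx1
    rw [hdleq, List.count_append, hc0] at hx
    omega
  obtain ⟨z₁, z₂, hsum, hz1, hz2⟩ := split_closed_aux w₂ hcnt
  refine ⟨x, z₁, a, w₁.append z₂, ?_, hz1, ?_⟩
  · rw [edges_append, List.length_append, hE, List.length_append]
    omega
  · rw [edges_append, List.length_append]
    omega

/-- Main extraction: an odd closed walk contains an odd cycle. -/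
lemma exists_cycle [Fintype V] [Fintype E] :
    ∀ (n : ℕ) {a : V} (w : IW ends S a a), w.edges.length = n → Odd n →
    ∃ C : Finset E, C ⊆ S ∧ IsOddCycle ends C := by
  intro n
  induction n using Nat.strong_induction_on with
  | _ n ih =>
    intro a w hlen hodd
    by_cases hnd : w.verts.dropLast.Nodup
    · have hodd' : Odd w.edges.length := by rw [hlen]; exact hodd
      have hnde : w.edges.Nodup := edges_nodup_of_simple w hodd' hnd
      have hdeg : ∀ v, deg ends w.edges.toFinset v = 2 * w.verts.dropLast.count v := by
        intro v
        rw [deg_eq_sum, List.sum_toFinset _ hnde, sum_inc v w, count_tail_eq w v]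
        omega
      refine ⟨w.edges.toFinset, ?_, ?_, ?_, ?_, ?_⟩
      · intro e hee
        exact edges_mem w (List.mem_toFinset.mp hee)
      · have hpos : 0 < w.edges.length := by
          rcases hodd' with ⟨m, hm⟩; omega
        obtain ⟨e, he⟩ := List.exists_mem_of_length_pos hpos
        exact ⟨e, List.mem_toFinset.mpr he⟩
      · rw [List.toFinset_card_of_nodup hnde]
        exact hodd'
      · intro v
        have hc : w.verts.dropLast.count v ≤ 1 := List.nodup_iff_count_le_one.mp hnd v
        rw [hdeg v]
        omega
      · intro p q hp hq
        have hmem : ∀ z : V, 0 < deg ends w.edges.toFinset z → z ∈ w.verts := by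
          intro z hz
          rw [hdeg z] at hz
          exact (List.dropLast_sublist w.verts).mem (List.count_pos_iff.mp (by omega))
        have h1 := rtg_start w (hmem p hp)
        have h2 := rtg_start w (hmem q hq)
        exact (rtg_symm h1).trans h2
    · obtain ⟨v₁, u₁, v₂, u₂, hsum, h1, h2⟩ := split_closed w hnd
      rw [hlen] at hsum
      rcases Nat.even_or_odd u₁.edges.length with hpar | hpar
      · have hodd2 : Odd u₂.edges.length := by
          rw [Nat.odd_iff] at hodd ⊢
          rw [Nat.even_iff] at hpar
          omega
        exact ih u₂.edges.length (by omega) u₂ rfl hodd2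
      · exact ih u₁.edges.length (by omega) u₁ rfl hpar

end IW

end MGAux

end AuxWalk4
section AuxWalk5

set_option linter.unusedSectionVars false

namespace MGAux

variable {V E : Type} [Fintype V] [Fintype E] [DecidableEq V] [DecidableEq E]
  {ends : E → V × V} {S : Finset E}

open MG

/-- A connected non-bipartite edge set carries an odd closed walk. -/
lemma odd_closed_walk_of_not_bip (hconn : ConnOn ends S) (hnb : ¬ BipOn ends S) :
    ∃ (a : V) (w : IW ends S a a), Odd w.edges.length := by
  classical
  have hbad : ∀ X : Finset V, ∃ e ∈ S, (((ends e).1 ∈ X) ↔ ((ends e).2 ∈ X)) := by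
    intro X
    by_contra hc
    push_neg at hc
    exact hnb ⟨X, fun e heS => by have := hc e heS; tauto⟩
  obtain ⟨e₀, he₀S, _⟩ := hbad ∅
  set r : V := (ends e₀).1 with hr
  set p : V → Prop := fun v => ∃ w : IW ends S r v, Even w.edges.length with hp
  have hdec : DecidablePred p := Classical.decPred p
  set Y : Finset V := Finset.univ.filter p with hY
  have hYmem : ∀ v, v ∈ Y ↔ p v := by
    intro v
    rw [hY, Finset.mem_filter]
    simp
  obtain ⟨e, heS, hbade⟩ := hbad Y
  set u := (ends e).1 with hu
  set v := (ends e).2 with hv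
  have huv : ends e = (u, v) := by rw [hu, hv]
  obtain ⟨wu⟩ := IW.of_rtg (hconn r u)
  obtain ⟨wv⟩ := IW.of_rtg (hconn r v)
  have key : ∀ (w₁ : IW ends S r u) (w₂ : IW ends S r v),
      (Even w₁.edges.length ↔ Even w₂.edges.length) →
      ∃ (a : V) (w : IW ends S a a), Odd w.edges.length := by
    intro w₁ w₂ hpar
    refine ⟨r, w₁.append ((IW.cons u e heS (Or.inl huv) (IW.nil v)).append w₂.reverse), ?_⟩
    rw [IW.edges_append, List.length_append, IW.edges_append, List.length_append]
    show Odd (w₁.edges.length + ((e :: (IW.nil v).edges).length + w₂.reverse.edges.length))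
    rw [IW.length_edges_reverse]
    simp only [IW.edges_nil, List.length_cons, List.length_nil]
    rcases Nat.even_or_odd w₁.edges.length with h1 | h1
    · have h2 : Even w₂.edges.length := hpar.mp h1
      rw [Nat.odd_iff]
      rw [Nat.even_iff] at h1 h2
      omega
    · have h2 : ¬ Even w₂.edges.length := fun h => (Nat.not_even_iff_odd.mpr h1) (hpar.mpr h)
      rw [Nat.odd_iff]
      rw [Nat.odd_iff] at h1
      rw [Nat.even_iff] at h2
      push_neg at h2
      omega
  by_cases hcu : u ∈ Y
  · have hcv : v ∈ Y := hbade.mp hcu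
    obtain ⟨w₁, hw₁⟩ := (hYmem u).mp hcu
    obtain ⟨w₂, hw₂⟩ := (hYmem v).mp hcv
    exact key w₁ w₂ (by simp [hw₁, hw₂])
  · have hcv : v ∉ Y := fun h => hcu (hbade.mpr h)
    have h1 : ¬ Even wu.edges.length := fun h => hcu ((hYmem u).mpr ⟨wu, h⟩)
    have h2 : ¬ Even wv.edges.length := fun h => hcv ((hYmem v).mpr ⟨wv, h⟩)
    exact key wu wv (by rw [iff_false_intro h1, iff_false_intro h2])

/-- Adding to a crossing-connected edge set an edge that does not cross gives an odd
closed walk. -/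
lemma odd_closed_walk_insert (hconn : ConnOn ends S) {g : Finset V}
    (hcr : ∀ e ∈ S, ¬ (((ends e).1 ∈ g) ↔ ((ends e).2 ∈ g))) {f : E}
    (hf : ((ends f).1 ∈ g) ↔ ((ends f).2 ∈ g)) :
    ∃ (a : V) (w : IW ends (insert f S) a a), Odd w.edges.length := by
  set u := (ends f).1 with hu
  set v := (ends f).2 with hv
  obtain ⟨w0⟩ := IW.of_rtg (hconn v u)
  have heven : Even w0.edges.length := (IW.even_iff_cross hcr w0).mp (by tauto)
  refine ⟨u, IW.cons u f (Finset.mem_insert_self f S) (Or.inl (by rw [hu, hv]))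
    (w0.mono (Finset.subset_insert f S)), ?_⟩
  show Odd (f :: (w0.mono _).edges).length
  rw [List.length_cons, IW.edges_mono]
  exact Even.add_one heven

/-- Uniqueness of bipartitions of connected spanning subgraphs. -/
lemma bip_unique (hconn : ConnOn ends S) {Y Y' : Finset V}
    (hY : ∀ e ∈ S, ¬ (((ends e).1 ∈ Y) ↔ ((ends e).2 ∈ Y)))
    (hY' : ∀ e ∈ S, ¬ (((ends e).1 ∈ Y') ↔ ((ends e).2 ∈ Y'))) :
    Y' = Y ∨ Y' = Yᶜ := by
  have key : ∀ p q : V, Relation.ReflTransGen (adjOn ends S) p q →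
      ((p ∈ Y ↔ p ∈ Y') ↔ (q ∈ Y ↔ q ∈ Y')) := by
    intro p q h
    induction h with
    | refl => exact Iff.rfl
    | tail hab hbc ihab =>
      obtain ⟨e, heS, hor⟩ := hbc
      have k1 := hY e heS
      have k2 := hY' e heS
      rcases hor with h | h <;> rw [h] at k1 k2 <;>
        · simp only at k1 k2
          rw [ihab]
          tauto
  by_cases hall : ∀ z : V, z ∈ Y ↔ z ∈ Y'
  · left
    ext z
    rw [hall z]
  · right
    push_neg at hall
    obtain ⟨z₀, hz₀⟩ := hall
    have hz₀' : ¬ (z₀ ∈ Y ↔ z₀ ∈ Y') := by tauto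
    ext z
    rw [Finset.mem_compl]
    have hzz : ¬ (z ∈ Y ↔ z ∈ Y') := fun h => hz₀' ((key z₀ z (hconn z₀ z)).mpr h)
    tauto

/-- Normalized bipartition with respect to a root vertex. -/
def normB (r : V) (Y : Finset V) : Finset V := if r ∈ Y then Y else Yᶜ

lemma normB_or (r : V) (Y : Finset V) : normB r Y = Y ∨ normB r Y = Yᶜ := by
  unfold normB
  split <;> simp

lemma normB_compl (r : V) (Y : Finset V) : normB r Yᶜ = normB r Y := by
  unfold normB
  by_cases h : r ∈ Y
  · rw [if_neg (by simp [h]), if_pos h, compl_compl]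
  · rw [if_pos (by simp [h]), if_neg h]

lemma normB_eq_of (r : V) {Y Y' : Finset V} (h : Y' = Y ∨ Y' = Yᶜ) :
    normB r Y' = normB r Y := by
  rcases h with h | h
  · rw [h]
  · rw [h, normB_compl]

lemma cross_compl {g : Finset V} {e : E} :
    (¬ (((ends e).1 ∈ gᶜ) ↔ ((ends e).2 ∈ gᶜ))) ↔ (¬ (((ends e).1 ∈ g) ↔ ((ends e).2 ∈ g))) := by
  simp only [Finset.mem_compl]
  tauto

lemma cross_normB {r : V} {Y : Finset V}
    (hY : ∀ e ∈ S, ¬ (((ends e).1 ∈ Y) ↔ ((ends e).2 ∈ Y))) :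
    ∀ e ∈ S, ¬ (((ends e).1 ∈ normB r Y) ↔ ((ends e).2 ∈ normB r Y)) := by
  intro e heS
  rcases normB_or r Y with h | h <;> rw [h]
  · exact hY e heS
  · exact cross_compl.mpr (hY e heS)

end MGAux

end AuxWalk5
section AuxPair

set_option linter.unusedSectionVars false

namespace MGAux

/-- Pair up `2k` items so that items in each pair have different labels, provided
no label occurs more than `k` times. -/
lemma pair_up {ι γ : Type} [DecidableEq ι] [DecidableEq γ] :
    ∀ (k : ℕ) (s : Finset ι) (c : ι → γ), s.card = 2 * k →
    (∀ g : γ, (s.filter fun i => c i = g).card ≤ k) →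
    ∃ p : Fin k → ι × ι,
      (∀ i, (p i).1 ∈ s ∧ (p i).2 ∈ s ∧ c (p i).1 ≠ c (p i).2 ∧ (p i).1 ≠ (p i).2) ∧
      (∀ i j, i ≠ j → (p i).1 ≠ (p j).1 ∧ (p i).1 ≠ (p j).2 ∧
        (p i).2 ≠ (p j).1 ∧ (p i).2 ≠ (p j).2) := by
  intro k
  induction k with
  | zero =>
    intro s c _ _
    exact ⟨fun i => i.elim0, fun i => i.elim0, fun i => i.elim0⟩
  | succ k ih =>
    intro s c hcard hmul
    have hne : s.Nonempty := by
      rw [← Finset.card_pos, hcard]; omega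
    obtain ⟨x, hx, hxmax⟩ := Finset.exists_max_image s
      (fun i => (s.filter fun j => c j = c i).card) hne
    have hother : ∃ y ∈ s, c y ≠ c x := by
      by_contra hs
      push_neg at hs
      have h1 : (s.filter fun i => c i = c x) = s := Finset.filter_eq_self.mpr hs
      have h2 := hmul (c x)
      rw [h1] at h2
      omega
    have htne : (s.filter fun i => c i ≠ c x).Nonempty := by
      obtain ⟨y, hy1, hy2⟩ := hother
      exact ⟨y, Finset.mem_filter.mpr ⟨hy1, hy2⟩⟩
    obtain ⟨y, hy, hymax⟩ := Finset.exists_max_image (s.filter fun i => c i ≠ c x)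
      (fun i => (s.filter fun j => c j = c i).card) htne
    rw [Finset.mem_filter] at hy
    obtain ⟨hys, hyx⟩ := hy
    have hxyne : x ≠ y := fun h => hyx (by rw [h])
    set t : Finset ι := (s.erase x).erase y with ht
    have hts : t ⊆ s := fun i hi =>
      Finset.erase_subset _ _ (Finset.erase_subset _ _ hi)
    have hxt : x ∉ t := by
      intro hxt
      exact (Finset.ne_of_mem_erase (Finset.mem_of_mem_erase hxt)) rfl
    have hyt : y ∉ t := fun hyt => (Finset.ne_of_mem_erase hyt) rfl
    have htcard : t.card = 2 * k := by
      rw [ht, Finset.card_erase_of_mem (Finset.mem_erase.mpr ⟨hxyne.symm, hys⟩),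
        Finset.card_erase_of_mem hx, hcard]
      omega
    have htmul : ∀ g : γ, (t.filter fun i => c i = g).card ≤ k := by
      intro g
      by_cases hgx : g = c x
      · have hsub : t.filter (fun i => c i = g) ⊆ (s.filter fun i => c i = g).erase x :=
          fun i hi => Finset.mem_erase.mpr ⟨fun h => hxt (h ▸ (Finset.mem_filter.mp hi).1),
            Finset.mem_filter.mpr ⟨hts (Finset.mem_filter.mp hi).1, (Finset.mem_filter.mp hi).2⟩⟩
        have hxin : x ∈ s.filter fun i => c i = g := Finset.mem_filter.mpr ⟨hx, hgx.symm⟩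
        have := Finset.card_le_card hsub
        rw [Finset.card_erase_of_mem hxin] at this
        have := hmul g
        omega
      · by_cases hgy : g = c y
        · have hsub : t.filter (fun i => c i = g) ⊆ (s.filter fun i => c i = g).erase y :=
            fun i hi => Finset.mem_erase.mpr ⟨fun h => hyt (h ▸ (Finset.mem_filter.mp hi).1),
              Finset.mem_filter.mpr ⟨hts (Finset.mem_filter.mp hi).1, (Finset.mem_filter.mp hi).2⟩⟩
          have hyin : y ∈ s.filter fun i => c i = g := Finset.mem_filter.mpr ⟨hys, hgy.symm⟩
          have := Finset.card_le_card hsub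
          rw [Finset.card_erase_of_mem hyin] at this
          have := hmul g
          omega
        · -- g differs from both c x and c y
          by_contra hgt
          push_neg at hgt
          have hgs : k + 1 ≤ (s.filter fun i => c i = g).card := by
            have := Finset.card_le_card (Finset.filter_subset_filter _ hts : 
              t.filter (fun i => c i = g) ⊆ s.filter fun i => c i = g)
            omega
          obtain ⟨z, hz⟩ : (s.filter fun i => c i = g).Nonempty := by
            rw [← Finset.card_pos]; omega
          rw [Finset.mem_filter] at hz
          obtain ⟨hzs, hzg⟩ := hz
          have hzx : c z ≠ c x := by rw [hzg]; exact hgx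
          have hzmem : z ∈ s.filter fun i => c i ≠ c x := Finset.mem_filter.mpr ⟨hzs, hzx⟩
          have h1 : (s.filter fun j => c j = c z).card ≤ (s.filter fun j => c j = c y).card :=
            hymax z hzmem
          have h2 : (s.filter fun j => c j = c y).card ≤ (s.filter fun j => c j = c x).card :=
            hxmax y hys
          rw [hzg] at h1
          -- three pairwise disjoint classes, each of card ≥ k+1, inside s of card 2k+2
          have hd1 : Disjoint (s.filter fun i => c i = g) (s.filter fun i => c i = c y) := by
            rw [Finset.disjoint_filter]
            intro i _ hig hiy
            exact hgy (hig ▸ hiy ▸ rfl)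
          have hd2 : Disjoint ((s.filter fun i => c i = g) ∪ (s.filter fun i => c i = c y))
              (s.filter fun i => c i = c x) := by
            rw [Finset.disjoint_union_left]
            constructor
            · rw [Finset.disjoint_filter]
              intro i _ hig hix
              exact hgx (hig ▸ hix ▸ rfl)
            · rw [Finset.disjoint_filter]
              intro i _ hiy hix
              exact hyx (hiy ▸ hix ▸ rfl)
          have hsub3 : ((s.filter fun i => c i = g) ∪ (s.filter fun i => c i = c y))
              ∪ (s.filter fun i => c i = c x) ⊆ s := by
            intro i hi
            rcases Finset.mem_union.mp hi with hi | hi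
            · rcases Finset.mem_union.mp hi with hi | hi <;>
                exact (Finset.mem_filter.mp hi).1
            · exact (Finset.mem_filter.mp hi).1
          have hcard3 := Finset.card_le_card hsub3
          rw [Finset.card_union_of_disjoint hd2, Finset.card_union_of_disjoint hd1, hcard] at hcard3
          omega
    obtain ⟨p', hp'1, hp'2⟩ := ih t c htcard htmul
    refine ⟨Fin.cons (x, y) (fun i => p' i), ?_, ?_⟩
    · intro i
      rcases Fin.eq_zero_or_eq_succ i with rfl | ⟨i', rfl⟩
      · simp only [Fin.cons_zero]
        exact ⟨hx, hys, fun h => hyx h.symm, hxyne⟩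
      · simp only [Fin.cons_succ]
        obtain ⟨h1, h2, h3, h4⟩ := hp'1 i'
        exact ⟨hts h1, hts h2, h3, h4⟩
    · intro i j hij
      rcases Fin.eq_zero_or_eq_succ i with rfl | ⟨i', rfl⟩ <;>
        rcases Fin.eq_zero_or_eq_succ j with rfl | ⟨j', rfl⟩
      · exact absurd rfl hij
      · simp only [Fin.cons_zero, Fin.cons_succ]
        obtain ⟨h1, h2, _, _⟩ := hp'1 j'
        exact ⟨fun h => hxt (h ▸ h1), fun h => hxt (h ▸ h2),
          fun h => hyt (h ▸ h1), fun h => hyt (h ▸ h2)⟩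
      · simp only [Fin.cons_zero, Fin.cons_succ]
        obtain ⟨h1, h2, _, _⟩ := hp'1 i'
        exact ⟨fun h => hxt (h.symm ▸ h1), fun h => hyt (h.symm ▸ h1),
          fun h => hxt (h.symm ▸ h2), fun h => hyt (h.symm ▸ h2)⟩
      · simp only [Fin.cons_succ]
        have hij' : i' ≠ j' := fun h => hij (by rw [h])
        exact hp'2 i' j' hij'
  
end MGAux

end AuxPair
section AuxEasy

set_option linter.unusedSectionVars false

namespace MGAux

variable {V E : Type} [Fintype V] [Fintype E] [DecidableEq V] [DecidableEq E]
  {ends : E → V × V}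

open MG

lemma oddcycle_bad_nonempty {C : Finset E} (hC : IsOddCycle ends C) (X : Finset V) :
    (bad ends C X).Nonempty := by
  obtain ⟨hCne, hCodd, hCdeg, _⟩ := hC
  by_contra hemp
  rw [Finset.not_nonempty_iff_eq_empty] at hemp
  have hcr : ∀ e ∈ C, ¬ (((ends e).1 ∈ X) ↔ ((ends e).2 ∈ X)) := by
    intro e heC hiff
    have hmem : e ∈ bad ends C X := Finset.mem_filter.mpr ⟨heC, hiff⟩
    rw [hemp] at hmem
    exact absurd hmem (Finset.notMem_empty e)
  have hsum : ∑ v ∈ X, deg ends C v = C.card := by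
    calc ∑ v ∈ X, deg ends C v = ∑ v ∈ X, ∑ e ∈ C, inc ends v e := by
          apply Finset.sum_congr rfl
          intro v _
          exact deg_eq_sum C v
    _ = ∑ e ∈ C, ∑ v ∈ X, inc ends v e := Finset.sum_comm
    _ = ∑ _e ∈ C, 1 := by
          apply Finset.sum_congr rfl
          intro e heC
          have hcr' := hcr e heC
          unfold inc
          rw [Finset.sum_add_distrib, Finset.sum_ite_eq X ((ends e).1) (fun _ => 1),
            Finset.sum_ite_eq X ((ends e).2) (fun _ => 1)]
          by_cases h1 : (ends e).1 ∈ X <;> by_cases h2 : (ends e).2 ∈ X <;>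
            simp [h1, h2] <;> tauto
    _ = C.card := by simp
  have heven : Even (∑ v ∈ X, deg ends C v) := by
    apply Finset.even_sum
    intro v _
    rcases hCdeg v with h | h <;> rw [h]
    · exact ⟨0, rfl⟩
    · exact ⟨1, rfl⟩
  rw [hsum] at heven
  rw [Nat.even_iff] at heven
  rw [Nat.odd_iff] at hCodd
  omega

lemma easy_dir {k : ℕ} (C : Fin k → Finset E) (hodd : ∀ i, IsOddCycle ends (C i))
    (hdis : ∀ i j, i ≠ j → Disjoint (C i) (C j)) :
    k ≤ biIndexOn ends Finset.univ := by
  unfold biIndexOn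
  apply Finset.le_inf'
  intro X _
  have hsub : (Finset.univ : Finset (Fin k)).biUnion (fun i => bad ends (C i) X)
      ⊆ bad ends Finset.univ X := by
    intro e he
    obtain ⟨i, _, hi⟩ := Finset.mem_biUnion.mp he
    unfold MG.bad at hi ⊢
    rw [Finset.mem_filter] at hi ⊢
    exact ⟨Finset.mem_univ e, hi.2⟩
  have hdisj' : ∀ i ∈ (Finset.univ : Finset (Fin k)), ∀ j ∈ Finset.univ, i ≠ j →
      Disjoint (bad ends (C i) X) (bad ends (C j) X) := fun i _ j _ hij =>
    Finset.disjoint_filter_filter (hdis i j hij)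
  have hcard := Finset.card_biUnion hdisj'
  have hk : k ≤ ((Finset.univ : Finset (Fin k)).biUnion (fun i => bad ends (C i) X)).card := by
    rw [hcard]
    calc k = ∑ _i : Fin k, 1 := by simp
    _ ≤ ∑ i, (bad ends (C i) X).card := by
        apply Finset.sum_le_sum
        intro i _
        exact Finset.card_pos.mpr (oddcycle_bad_nonempty (hodd i) X)
  exact le_trans hk (Finset.card_le_card hsub)

end MGAux

end AuxEasy

theorem stmt11 {V E : Type} [Fintype V] [Fintype E] [DecidableEq V] [DecidableEq E]
    (ends : E → V × V) (k : ℕ)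
    (htc : TreeConnOn ends (2 * k) Finset.univ) :
    k ≤ biIndexOn ends Finset.univ ↔
      ∃ C : Fin k → Finset E, (∀ i, IsOddCycle ends (C i)) ∧
        ∀ i j, i ≠ j → Disjoint (C i) (C j) := by
  constructor
  · intro hbi
    rcases Nat.eq_zero_or_pos k with hk0 | hkpos
    · subst hk0
      exact ⟨fun i => i.elim0, fun i => i.elim0, fun i j _ => i.elim0⟩
    · classical
      obtain ⟨T, hT, hTdis⟩ := htc
      have hV : Nonempty V := by
        have h0 : (0 : ℕ) < 2 * k := by omega
        have hc := (hT ⟨0, h0⟩).2.2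
        exact Fintype.card_pos_iff.mp (by omega)
      obtain ⟨r⟩ := hV
      have hbadcard : ∀ X : Finset V, k ≤ (bad ends Finset.univ X).card := by
        intro X
        exact le_trans hbi (Finset.inf'_le _ (Finset.mem_univ X))
      set lab : Fin (2*k) → (Finset V) ⊕ (Fin (2*k)) := fun j =>
        if h : BipOn ends (T j) then Sum.inl (MGAux.normB r h.choose) else Sum.inr j with hlab
      have hlab_inl : ∀ j g, lab j = Sum.inl g →
          ∀ e ∈ T j, ¬ (((ends e).1 ∈ g) ↔ ((ends e).2 ∈ g)) := by
        intro j g hj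
        simp only [hlab] at hj
        by_cases h : BipOn ends (T j)
        · rw [dif_pos h] at hj
          have hg : MGAux.normB r h.choose = g := Sum.inl.inj hj
          have hspec := h.choose_spec
          have hcr := MGAux.cross_normB (r := r) hspec
          rw [hg] at hcr
          exact hcr
        · rw [dif_neg h] at hj
          exact absurd hj (by simp)
      by_cases hbig : ∃ g : Finset V, k ≤ (Finset.univ.filter fun j => lab j = Sum.inl g).card
      · -- CASE A: one bipartition shared by at least k trees
        obtain ⟨g, hg⟩ := hbig
        obtain ⟨W, hWsub, hWcard⟩ := Finset.exists_subset_card_eq hg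
        obtain ⟨F, hFsub, hFcard⟩ := Finset.exists_subset_card_eq (hbadcard g)
        set τ : Fin k → Fin (2*k) :=
          fun i => ((W.equivFin.symm (Fin.cast hWcard.symm i)) : {x // x ∈ W}).1 with hτ
        have hτW : ∀ i, τ i ∈ W := fun i => ((W.equivFin.symm (Fin.cast hWcard.symm i))).2
        have hτinj : Function.Injective τ := by
          intro i j hij
          have h2 : W.equivFin.symm (Fin.cast hWcard.symm i)
              = W.equivFin.symm (Fin.cast hWcard.symm j) := Subtype.ext hij
          have h3 := W.equivFin.symm.injective h2
          have h4 := congrArg Fin.val h3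
          simp only [Fin.coe_cast] at h4
          exact Fin.ext h4
        set φ : Fin k → E :=
          fun i => ((F.equivFin.symm (Fin.cast hFcard.symm i)) : {x // x ∈ F}).1 with hφ
        have hφF : ∀ i, φ i ∈ F := fun i => ((F.equivFin.symm (Fin.cast hFcard.symm i))).2
        have hφinj : Function.Injective φ := by
          intro i j hij
          have h2 : F.equivFin.symm (Fin.cast hFcard.symm i)
              = F.equivFin.symm (Fin.cast hFcard.symm j) := Subtype.ext hij
          have h3 := F.equivFin.symm.injective h2
          have h4 := congrArg Fin.val h3
          simp only [Fin.coe_cast] at h4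
          exact Fin.ext h4
        have hcross : ∀ i, ∀ e ∈ T (τ i), ¬ (((ends e).1 ∈ g) ↔ ((ends e).2 ∈ g)) := by
          intro i
          have hWmem := hWsub (hτW i)
          exact hlab_inl (τ i) g (Finset.mem_filter.mp hWmem).2
        have hfbad : ∀ i, (((ends (φ i)).1 ∈ g) ↔ ((ends (φ i)).2 ∈ g)) := by
          intro i
          have hmem := hFsub (hφF i)
          unfold MG.bad at hmem
          exact (Finset.mem_filter.mp hmem).2
        have hEx : ∀ i : Fin k, ∃ Ci : Finset E,
            Ci ⊆ insert (φ i) (T (τ i)) ∧ IsOddCycle ends Ci := by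
          intro i
          have hconn : ConnOn ends (T (τ i)) := (hT (τ i)).2.1
          obtain ⟨a, w, hodd⟩ := MGAux.odd_closed_walk_insert hconn (hcross i) (hfbad i)
          exact MGAux.IW.exists_cycle w.edges.length w rfl hodd
        choose C hCsub hCodd using hEx
        refine ⟨C, hCodd, ?_⟩
        intro i j hij
        rw [Finset.disjoint_left]
        intro x hxi hxj
        have h1 := hCsub i hxi
        have h2 := hCsub j hxj
        rcases Finset.mem_insert.mp h1 with h1 | h1 <;> rcases Finset.mem_insert.mp h2 with h2 | h2
        · exact hij (hφinj (h1.symm.trans h2))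
        · exact (hcross j x h2) (by rw [h1]; exact hfbad i)
        · exact (hcross i x h1) (by rw [h2]; exact hfbad j)
        · have hne : τ i ≠ τ j := fun h => hij (hτinj h)
          exact (Finset.disjoint_left.mp (hTdis (τ i) (τ j) hne)) h1 h2
      · -- CASE B: pair up trees with different labels
        push_neg at hbig
        have hcond : ∀ g : (Finset V) ⊕ (Fin (2*k)),
            (Finset.univ.filter fun j => lab j = g).card ≤ k := by
          intro g
          rcases g with g | j0
          · exact le_of_lt (hbig g)
          · have hsub : (Finset.univ.filter fun j => lab j = Sum.inr j0) ⊆ {j0} := by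
              intro j hj
              rw [Finset.mem_filter] at hj
              have hj2 := hj.2
              simp only [hlab] at hj2
              by_cases h : BipOn ends (T j)
              · rw [dif_pos h] at hj2
                exact absurd hj2 (by simp)
              · rw [dif_neg h] at hj2
                rw [Finset.mem_singleton]
                exact Sum.inr.inj hj2
            have hle := Finset.card_le_card hsub
            rw [Finset.card_singleton] at hle
            omega
        have hcard2k : (Finset.univ : Finset (Fin (2*k))).card = 2 * k := by simp
        obtain ⟨p, hp1, hp2⟩ := MGAux.pair_up k Finset.univ lab hcard2k hcond
        have hEx : ∀ i : Fin k, ∃ Ci : Finset E,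
            Ci ⊆ T (p i).1 ∪ T (p i).2 ∧ IsOddCycle ends Ci := by
          intro i
          obtain ⟨_, _, hlabne, _⟩ := hp1 i
          have hconnU : ConnOn ends (T (p i).1 ∪ T (p i).2) := by
            intro u v'
            refine Relation.ReflTransGen.mono ?_ _ _ ((hT (p i).1).2.1 u v')
            rintro x y ⟨e, he, hor⟩
            exact ⟨e, Finset.mem_union_left _ he, hor⟩
          have hnb : ¬ BipOn ends (T (p i).1 ∪ T (p i).2) := by
            rintro ⟨Y, hY⟩
            have hb1 : BipOn ends (T (p i).1) :=
              ⟨Y, fun e he => hY e (Finset.mem_union_left _ he)⟩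
            have hb2 : BipOn ends (T (p i).2) :=
              ⟨Y, fun e he => hY e (Finset.mem_union_right _ he)⟩
            apply hlabne
            simp only [hlab]
            rw [dif_pos hb1, dif_pos hb2]
            congr 1
            calc MGAux.normB r hb1.choose
                = MGAux.normB r Y := MGAux.normB_eq_of r
                  (MGAux.bip_unique (hT (p i).1).2.1
                    (fun e he => hY e (Finset.mem_union_left _ he)) hb1.choose_spec)
              _ = MGAux.normB r hb2.choose := (MGAux.normB_eq_of r
                  (MGAux.bip_unique (hT (p i).2).2.1
                    (fun e he => hY e (Finset.mem_union_right _ he)) hb2.choose_spec)).symm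
          obtain ⟨a, w, hodd⟩ := MGAux.odd_closed_walk_of_not_bip hconnU hnb
          exact MGAux.IW.exists_cycle w.edges.length w rfl hodd
        choose C hCsub hCodd using hEx
        refine ⟨C, hCodd, ?_⟩
        intro i j hij
        rw [Finset.disjoint_left]
        intro x hxi hxj
        obtain ⟨hne11, hne12, hne21, hne22⟩ := hp2 i j hij
        have h1 := hCsub i hxi
        have h2 := hCsub j hxj
        rcases Finset.mem_union.mp h1 with h1 | h1 <;> rcases Finset.mem_union.mp h2 with h2 | h2
        · exact Finset.disjoint_left.mp (hTdis _ _ hne11) h1 h2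
        · exact Finset.disjoint_left.mp (hTdis _ _ hne12) h1 h2
        · exact Finset.disjoint_left.mp (hTdis _ _ hne21) h1 h2
        · exact Finset.disjoint_left.mp (hTdis _ _ hne22) h1 h2
  · rintro ⟨C, hodd, hdis⟩
    exact MGAux.easy_dir C hodd hdis
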